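/- For positive semidefinite n×n complex matrices A and B and any real r ≥ 1, the trace norm satisfies ‖A^r + B^r‖₁ ≤ ‖(A+B)^r‖₁, i.e. tr(A^r) + tr(B^r) ≤ tr((A+B)^r). -/

import Mathlib

open Matrix
open scoped ComplexOrder

/-- `f` applied to a matrix via the spectral decomposition (junk value `0` if
the matrix is not Hermitian). -/
noncomputable def matFun {n : ℕ} (f : ℝ → ℝ) (A : Matrix (Fin n) (Fin n) ℂ) :
    Matrix (Fin n) (Fin n) ℂ :=
  if hA : A.IsHermitian then
    (hA.eigenvectorUnitary : Matrix (Fin n) (Fin n) ℂ) *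
      Matrix.diagonal (fun i => (f (hA.eigenvalues i) : ℂ)) *
      (star hA.eigenvectorUnitary : Matrix (Fin n) (Fin n) ℂ)
  else 0

/-- The eigenvalues of a Hermitian matrix, sorted in non-increasing order
(junk value `0` if the matrix is not Hermitian). -/
noncomputable def eigsDesc {n : ℕ} (A : Matrix (Fin n) (Fin n) ℂ) : Fin n → ℝ :=
  if hA : A.IsHermitian then (fun k => hA.eigenvalues (Tuple.sort hA.eigenvalues (Fin.rev k)))
  else 0

/-- The absolute value `|X| = (XᴴX)^{1/2}` of a matrix. -/
noncomputable def matAbs {n : ℕ} (X : Matrix (Fin n) (Fin n) ℂ) : Matrix (Fin n) (Fin n) ℂ :=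
  ((Matrix.posSemidef_conjTranspose_mul_self X).1.eigenvectorUnitary : Matrix (Fin n) (Fin n) ℂ) *
    Matrix.diagonal ((↑) ∘ (Real.sqrt ·) ∘ (Matrix.posSemidef_conjTranspose_mul_self X).1.eigenvalues) *
    (star (Matrix.posSemidef_conjTranspose_mul_self X).1.eigenvectorUnitary : Matrix (Fin n) (Fin n) ℂ)

/-- The singular values of `X`, sorted in non-increasing order. -/
noncomputable def svalsDesc {n : ℕ} (X : Matrix (Fin n) (Fin n) ℂ) : Fin n → ℝ :=
  eigsDesc (matAbs X)

/-- Sum of the first `k` entries of a vector indexed by `Fin n`. -/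
noncomputable def kSum {n : ℕ} (μ : Fin n → ℝ) (k : ℕ) : ℝ :=
  ∑ j ∈ Finset.univ.filter (fun j : Fin n => (j : ℕ) < k), μ j

/-- The operator norm: the largest singular value. -/
noncomputable def opNorm {n : ℕ} (X : Matrix (Fin n) (Fin n) ℂ) : ℝ :=
  ⨆ i, svalsDesc X i



open Finset in
lemma holder_aux {ι : Type*} (t : Finset ι) (a b : ι → ℝ) (ha : ∀ i ∈ t, 0 ≤ a i)
    (hb : ∀ i ∈ t, 0 ≤ b i) (α : ℝ) (hα : 0 < α) (hα1 : α < 1) :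
    ∑ i ∈ t, (a i) ^ α * (b i) ^ (1 - α) ≤ (∑ i ∈ t, a i) ^ α * (∑ i ∈ t, b i) ^ (1 - α) := by
  set A := ∑ i ∈ t, a i with hA
  set B := ∑ i ∈ t, b i with hB
  have hA0 : 0 ≤ A := Finset.sum_nonneg ha
  have hB0 : 0 ≤ B := Finset.sum_nonneg hb
  rcases eq_or_lt_of_le hA0 with h | hApos
  · have : ∀ i ∈ t, a i = 0 := fun i hi => le_antisymm (by
      have := Finset.single_le_sum ha hi; linarith) (ha i hi)
    have : ∑ i ∈ t, (a i) ^ α * (b i) ^ (1 - α) = 0 := by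
      apply Finset.sum_eq_zero; intro i hi
      rw [this i hi, Real.zero_rpow hα.ne', zero_mul]
    rw [this]; positivity
  rcases eq_or_lt_of_le hB0 with h | hBpos
  · have : ∀ i ∈ t, b i = 0 := fun i hi => le_antisymm (by
      have := Finset.single_le_sum hb hi; linarith) (hb i hi)
    have : ∑ i ∈ t, (a i) ^ α * (b i) ^ (1 - α) = 0 := by
      apply Finset.sum_eq_zero; intro i hi
      rw [this i hi, Real.zero_rpow (by linarith), mul_zero]
    rw [this]; positivity
  have key : ∀ i ∈ t, (a i) ^ α * (b i) ^ (1 - α) ≤ (α * (a i / A) + (1 - α) * (b i / B)) * (A ^ α * B ^ (1 - α)) := by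
    intro i hi
    have h2 := Real.geom_mean_le_arith_mean2_weighted hα.le (by linarith : (0:ℝ) ≤ 1 - α)
      (div_nonneg (ha i hi) hA0) (div_nonneg (hb i hi) hB0) (by ring)
    calc (a i) ^ α * (b i) ^ (1 - α)
        = ((a i / A) ^ α * (b i / B) ^ (1 - α)) * (A ^ α * B ^ (1 - α)) := by
          rw [Real.div_rpow (ha i hi) hA0, Real.div_rpow (hb i hi) hB0]
          field_simp
      _ ≤ (α * (a i / A) + (1 - α) * (b i / B)) * (A ^ α * B ^ (1 - α)) := by
          apply mul_le_mul_of_nonneg_right h2; positivity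
  calc ∑ i ∈ t, (a i) ^ α * (b i) ^ (1 - α)
      ≤ ∑ i ∈ t, (α * (a i / A) + (1 - α) * (b i / B)) * (A ^ α * B ^ (1 - α)) :=
        Finset.sum_le_sum key
    _ = (α * (A / A) + (1 - α) * (B / B)) * (A ^ α * B ^ (1 - α)) := by
        rw [← Finset.sum_mul]; congr 1
        rw [Finset.sum_add_distrib, ← Finset.mul_sum, ← Finset.mul_sum, ← Finset.sum_div, ← Finset.sum_div]
    _ = A ^ α * B ^ (1 - α) := by
        rw [div_self hApos.ne', div_self hBpos.ne']; ring

lemma sum_lemma {ι : Type*} [Fintype ι] (μ c : ι → ℝ) (hμ : ∀ j, 0 ≤ μ j)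
    (hc : ∀ j, 0 ≤ c j) (lam s : ℝ) (hlam : 0 < lam) (hs : 0 ≤ s)
    (hzero : ∀ j, μ j = 0 → c j = 0)
    (h1 : ∑ j, c j = 1)
    (hneg : ∑ j, c j * μ j ^ (-(1:ℝ)/2) ≤ lam ^ (-(1:ℝ)/2)) :
    lam ^ s ≤ ∑ j, c j * μ j ^ s := by
  rcases eq_or_lt_of_le hs with h | hs
  · simp only [← h, Real.rpow_zero, mul_one]; rw [h1]
  set α : ℝ := 1 / (2 * s + 1) with hαdef
  have hα : 0 < α := by positivity
  have hα1 : α < 1 := by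
    rw [hαdef, div_lt_one (by linarith)]; linarith
  have key : ∀ j, c j = (c j * μ j ^ s) ^ α * (c j * μ j ^ (-(1:ℝ)/2)) ^ (1 - α) := by
    intro j
    rcases eq_or_lt_of_le (hc j) with hcj | hcj
    · rw [← hcj]; simp [Real.zero_rpow hα.ne']
    rcases eq_or_lt_of_le (hμ j) with h | hμj
    · exact absurd (hzero j h.symm) hcj.ne'
    rw [Real.mul_rpow (hc j) (Real.rpow_nonneg (hμ j) _),
        Real.mul_rpow (hc j) (Real.rpow_nonneg (hμ j) _),
        ← Real.rpow_mul (hμ j), ← Real.rpow_mul (hμ j)]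
    have e1 : c j ^ α * c j ^ (1 - α) = c j := by
      rw [← Real.rpow_add hcj]; simp
    have e2 : s * α + -1 / 2 * (1 - α) = 0 := by
      rw [hαdef]; field_simp; ring
    calc c j = (c j ^ α * c j ^ (1 - α)) * μ j ^ (s * α + -1 / 2 * (1 - α)) := by
          rw [e1, e2, Real.rpow_zero, mul_one]
      _ = c j ^ α * μ j ^ (s * α) * (c j ^ (1 - α) * μ j ^ (-1 / 2 * (1 - α))) := by
          rw [Real.rpow_add hμj]; ring
  have ha : ∀ j ∈ Finset.univ (α := ι), 0 ≤ c j * μ j ^ s := fun j _ =>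
    mul_nonneg (hc j) (Real.rpow_nonneg (hμ j) _)
  have hb : ∀ j ∈ Finset.univ (α := ι), 0 ≤ c j * μ j ^ (-(1:ℝ)/2) := fun j _ =>
    mul_nonneg (hc j) (Real.rpow_nonneg (hμ j) _)
  set S := ∑ j, c j * μ j ^ s with hS
  have hS0 : 0 ≤ S := Finset.sum_nonneg ha
  have hB0 : 0 ≤ ∑ j, c j * μ j ^ (-(1:ℝ)/2) := Finset.sum_nonneg hb
  have h2 : (1:ℝ) ≤ S ^ α * (lam ^ (-(1:ℝ)/2)) ^ (1 - α) := by
    calc (1:ℝ) = ∑ j, c j := h1.symm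
      _ = ∑ j, (c j * μ j ^ s) ^ α * (c j * μ j ^ (-(1:ℝ)/2)) ^ (1 - α) := by
          exact Finset.sum_congr rfl fun j _ => key j
      _ ≤ S ^ α * (∑ j, c j * μ j ^ (-(1:ℝ)/2)) ^ (1 - α) :=
          holder_aux _ _ _ ha hb α hα hα1
      _ ≤ S ^ α * (lam ^ (-(1:ℝ)/2)) ^ (1 - α) := by
          apply mul_le_mul_of_nonneg_left _ (Real.rpow_nonneg hS0 _)
          exact Real.rpow_le_rpow hB0 hneg (by linarith)
  have h2s : (2*s+1) ≠ 0 := by positivity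
  have hpow : (lam ^ (-(1:ℝ)/2)) ^ (1 - α) = lam ^ (-(1:ℝ)/2 * (1-α)) := by
    rw [← Real.rpow_mul hlam.le]
  rw [hpow] at h2
  have h3 : lam ^ ((1:ℝ)/2 * (1 - α)) ≤ S ^ α := by
    calc lam ^ ((1:ℝ)/2 * (1 - α)) = 1 * lam ^ ((1:ℝ)/2 * (1 - α)) := (one_mul _).symm
      _ ≤ (S ^ α * lam ^ (-(1:ℝ)/2 * (1-α))) * lam ^ ((1:ℝ)/2 * (1 - α)) :=
          mul_le_mul_of_nonneg_right h2 (Real.rpow_pos_of_pos hlam _).le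
      _ = S ^ α * lam ^ ((-(1:ℝ)/2 * (1-α)) + (1:ℝ)/2 * (1 - α)) := by
          rw [mul_assoc, ← Real.rpow_add hlam]
      _ = S ^ α := by norm_num
  have h4 := Real.rpow_le_rpow (Real.rpow_nonneg hlam.le _) h3 (le_of_lt (by positivity : (0:ℝ) < 1/α))
  rw [← Real.rpow_mul hlam.le, ← Real.rpow_mul hS0] at h4
  have e3 : (1:ℝ)/2 * (1 - α) * (1/α) = s := by
    rw [hαdef]; field_simp; ring
  have e4 : α * (1/α) = 1 := by field_simp
  rw [e3, e4, Real.rpow_one] at h4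
  exact h4

lemma spectral' {n : ℕ} {A : Matrix (Fin n) (Fin n) ℂ} (hA : A.IsHermitian) :
    A = (hA.eigenvectorUnitary : Matrix (Fin n) (Fin n) ℂ) *
      diagonal (fun j => ((hA.eigenvalues j : ℝ) : ℂ)) *
      star (hA.eigenvectorUnitary : Matrix (Fin n) (Fin n) ℂ) := hA.spectral_theorem

lemma star_mul_self_eq_one {n : ℕ} {A : Matrix (Fin n) (Fin n) ℂ} (hA : A.IsHermitian) :
    star (hA.eigenvectorUnitary : Matrix (Fin n) (Fin n) ℂ) *
      (hA.eigenvectorUnitary : Matrix (Fin n) (Fin n) ℂ) = 1 :=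
  Matrix.mem_unitaryGroup_iff'.mp hA.eigenvectorUnitary.2

lemma mul_star_self_eq_one {n : ℕ} {A : Matrix (Fin n) (Fin n) ℂ} (hA : A.IsHermitian) :
    (hA.eigenvectorUnitary : Matrix (Fin n) (Fin n) ℂ) *
      star (hA.eigenvectorUnitary : Matrix (Fin n) (Fin n) ℂ) = 1 :=
  Matrix.mem_unitaryGroup_iff.mp hA.eigenvectorUnitary.2

lemma norm_flip {n : ℕ} (X Y : Matrix (Fin n) (Fin n) ℂ) (a b : Fin n) :
    ‖(star X * Y) a b‖ = ‖(star Y * X) b a‖ := by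
  have h : star X * Y = star (star Y * X) := by rw [Matrix.star_mul, star_star]
  rw [h, Matrix.star_apply, norm_star]

lemma one_norm_sum {n : ℕ} (d : Fin n → ℝ) (j : Fin n) :
    ∑ m, d m * ‖(1 : Matrix (Fin n) (Fin n) ℂ) m j‖ ^ 2 = d j := by
  have h : ∀ m, d m * ‖(1 : Matrix (Fin n) (Fin n) ℂ) m j‖ ^ 2
      = if m = j then d m else 0 := by
    intro m
    by_cases h : m = j <;> simp [Matrix.one_apply, h]
  rw [Finset.sum_congr rfl fun m _ => h m, Finset.sum_ite_eq' Finset.univ j d]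
  simp

lemma sum_norm_col {n : ℕ} (P : Matrix (Fin n) (Fin n) ℂ) (hP : star P * P = 1) (i : Fin n) :
    ∑ j, ‖P j i‖ ^ 2 = 1 := by
  have h2 : ∑ j, (star P) i j * P j i = (1 : Matrix (Fin n) (Fin n) ℂ) i i := by
    rw [← Matrix.mul_apply, hP]
  rw [Matrix.one_apply_eq] at h2
  have h : ((∑ j, ‖P j i‖ ^ 2 : ℝ) : ℂ) = (1 : ℂ) := by
    rw [← h2]
    push_cast
    apply Finset.sum_congr rfl
    intro j _
    rw [Matrix.star_apply, Complex.star_def, Complex.conj_mul']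
  exact_mod_cast h

lemma sandwich {n : ℕ} (V M : Matrix (Fin n) (Fin n) ℂ) (d : Fin n → ℝ) (i : Fin n) :
    (star M * (V * Matrix.diagonal (fun j => (d j : ℂ)) * star V) * M) i i
      = ((∑ j, d j * ‖(star V * M) j i‖ ^ 2 : ℝ) : ℂ) := by
  have h1 : star M * (V * Matrix.diagonal (fun j => (d j : ℂ)) * star V) * M
      = star (star V * M) * (Matrix.diagonal (fun j => (d j : ℂ)) * (star V * M)) := by
    rw [Matrix.star_mul, star_star]
    noncomm_ring
  rw [h1, Matrix.mul_apply]
  push_cast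
  apply Finset.sum_congr rfl
  intro j _
  rw [Matrix.diagonal_mul, Matrix.star_apply]
  set z := (star V * M) j i
  rw [mul_comm (star z), mul_assoc, mul_comm z (star z), Complex.star_def, Complex.conj_mul']

lemma trace_matFun {n : ℕ} (f : ℝ → ℝ) {A : Matrix (Fin n) (Fin n) ℂ} (hA : A.IsHermitian) :
    ((matFun f A).trace).re = ∑ i, f (hA.eigenvalues i) := by
  unfold matFun
  rw [dif_pos hA, Matrix.trace_mul_cycle, star_mul_self_eq_one hA, one_mul,
    Matrix.trace_diagonal]
  rw [Complex.re_sum]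
  simp

lemma hneg_gen {n : ℕ} (A B U W V : Matrix (Fin n) (Fin n) ℂ) (lam ν μ : Fin n → ℝ)
    (specA : A = U * diagonal (fun i => ((lam i : ℝ) : ℂ)) * star U)
    (specB : B = W * diagonal (fun k => ((ν k : ℝ) : ℂ)) * star W)
    (specC : A + B = V * diagonal (fun j => ((μ j : ℝ) : ℂ)) * star V)
    (hUst : star U * U = 1) (hVst : star V * V = 1) (hVmul : V * star V = 1)
    (hlam : ∀ i, 0 ≤ lam i) (hν : ∀ k, 0 ≤ ν k) (hμ : ∀ j, 0 ≤ μ j)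
    (i : Fin n) (hpos : 0 < lam i) :
    ∑ j, μ j ^ (-(1:ℝ)/2) * ‖(star V * U) j i‖ ^ 2 ≤ lam i ^ (-(1:ℝ)/2) := by
  set d : Fin n → ℝ := fun j => μ j ^ (-(1:ℝ)/2) with hd
  set c : Fin n → ℝ := fun j => ‖(star V * U) j i‖ ^ 2 with hc
  set G : Matrix (Fin n) (Fin n) ℂ := V * diagonal (fun j => ((d j : ℝ) : ℂ)) * star V with hG
  set M : Matrix (Fin n) (Fin n) ℂ := G * U with hM
  set T : ℝ := ∑ j, d j * c j with hT
  have hc0 : ∀ j, 0 ≤ c j := fun j => sq_nonneg _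
  have hd0 : ∀ j, 0 ≤ d j := fun j => Real.rpow_nonneg (hμ j) _
  have hT0 : 0 ≤ T := Finset.sum_nonneg fun j _ => mul_nonneg (hd0 j) (hc0 j)
  -- column sums of star V * U are 1
  have hP1 : star (star V * U) * (star V * U) = 1 := by
    rw [Matrix.star_mul, star_star]
    calc star U * V * (star V * U) = star U * (V * star V) * U := by noncomm_ring
      _ = 1 := by rw [hVmul, mul_one, hUst]
  have hsum1 : ∑ j, c j = 1 := sum_norm_col _ hP1 i
  -- (star U * M) i i = T
  have hUMii : (star U * M) i i = ((T : ℝ) : ℂ) := by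
    rw [hM, ← mul_assoc, hG]
    exact sandwich V U d i
  -- star V * M = diagonal d * (star V * U)
  have hVM : star V * M = diagonal (fun j => ((d j : ℝ) : ℂ)) * (star V * U) := by
    rw [hM, hG]
    calc star V * (V * diagonal (fun j => ((d j : ℝ) : ℂ)) * star V * U)
        = (star V * V) * (diagonal (fun j => ((d j : ℝ) : ℂ)) * (star V * U)) := by
          noncomm_ring
      _ = diagonal (fun j => ((d j : ℝ) : ℂ)) * (star V * U) := by rw [hVst, one_mul]
  have hVMnorm : ∀ j, ‖(star V * M) j i‖ ^ 2 = d j ^ 2 * c j := by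
    intro j
    rw [hVM, Matrix.diagonal_mul, norm_mul, Complex.norm_real, Real.norm_eq_abs,
      abs_of_nonneg (hd0 j)]
    simp only [hc]
    ring
  -- the three sandwich identities
  have hAs : (star M * A * M) i i
      = ((∑ m, lam m * ‖(star U * M) m i‖ ^ 2 : ℝ) : ℂ) := by
    conv_lhs => rw [specA]
    exact sandwich U M lam i
  have hBs : (star M * B * M) i i
      = ((∑ k, ν k * ‖(star W * M) k i‖ ^ 2 : ℝ) : ℂ) := by
    conv_lhs => rw [specB]
    exact sandwich W M ν i
  have hCs : (star M * (A + B) * M) i i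
      = ((∑ j, μ j * ‖(star V * M) j i‖ ^ 2 : ℝ) : ℂ) := by
    conv_lhs => rw [specC]
    exact sandwich V M μ i
  have hsplit : (star M * (A + B) * M) i i = (star M * A * M) i i + (star M * B * M) i i := by
    rw [mul_add, add_mul, Matrix.add_apply]
  have hreal : ∑ j, μ j * ‖(star V * M) j i‖ ^ 2
      = (∑ m, lam m * ‖(star U * M) m i‖ ^ 2) + (∑ k, ν k * ‖(star W * M) k i‖ ^ 2) := by
    have := hCs.symm.trans (hsplit.trans (by rw [hAs, hBs]))
    exact_mod_cast this
  -- lower bound: lam i * T^2 ≤ sumA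
  have hlow : lam i * T ^ 2 ≤ ∑ m, lam m * ‖(star U * M) m i‖ ^ 2 := by
    have h1 : lam i * ‖(star U * M) i i‖ ^ 2 ≤ ∑ m, lam m * ‖(star U * M) m i‖ ^ 2 :=
      Finset.single_le_sum (f := fun m => lam m * ‖(star U * M) m i‖ ^ 2)
        (fun m _ => mul_nonneg (hlam m) (sq_nonneg _)) (Finset.mem_univ i)
    rwa [hUMii, Complex.norm_real, Real.norm_eq_abs, abs_of_nonneg hT0] at h1
  -- upper bound: sumC ≤ 1
  have hup : ∑ j, μ j * ‖(star V * M) j i‖ ^ 2 ≤ 1 := by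
    rw [← hsum1]
    apply Finset.sum_le_sum
    intro j _
    rw [hVMnorm j]
    rcases eq_or_lt_of_le (hμ j) with h0 | hμj
    · rw [← h0, zero_mul]
      exact hc0 j
    · have hdj : d j ^ 2 = (μ j)⁻¹ := by
        rw [hd, pow_two, ← Real.rpow_add hμj]
        norm_num
        rw [Real.rpow_neg_one]
      rw [hdj, ← mul_assoc, mul_inv_cancel₀ hμj.ne', one_mul]
  have hB0 : 0 ≤ ∑ k, ν k * ‖(star W * M) k i‖ ^ 2 :=
    Finset.sum_nonneg fun k _ => mul_nonneg (hν k) (sq_nonneg _)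
  have hmain : lam i * T ^ 2 ≤ 1 := by
    calc lam i * T ^ 2 ≤ ∑ m, lam m * ‖(star U * M) m i‖ ^ 2 := hlow
      _ ≤ ∑ j, μ j * ‖(star V * M) j i‖ ^ 2 := by rw [hreal]; linarith
      _ ≤ 1 := hup
  -- conclude T ≤ lam i ^ (-1/2)
  have hT2 : T ^ 2 ≤ (lam i)⁻¹ := by
    rw [inv_eq_one_div, le_div_iff₀ hpos]
    linarith [hmain, mul_comm (lam i) (T ^ 2)]
  calc T = Real.sqrt (T ^ 2) := (Real.sqrt_sq hT0).symm
    _ ≤ Real.sqrt ((lam i)⁻¹) := Real.sqrt_le_sqrt hT2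
    _ = lam i ^ (-(1:ℝ)/2) := by
        rw [Real.sqrt_inv, Real.sqrt_eq_rpow, ← Real.rpow_neg hpos.le]
        norm_num

lemma mu_decomp_gen {n : ℕ} (A B U W V : Matrix (Fin n) (Fin n) ℂ) (lam ν μ : Fin n → ℝ)
    (specA : A = U * diagonal (fun i => ((lam i : ℝ) : ℂ)) * star U)
    (specB : B = W * diagonal (fun k => ((ν k : ℝ) : ℂ)) * star W)
    (specC : A + B = V * diagonal (fun j => ((μ j : ℝ) : ℂ)) * star V)
    (hVst : star V * V = 1) (j : Fin n) :
    μ j = (∑ i, lam i * ‖(star V * U) j i‖ ^ 2) + (∑ k, ν k * ‖(star V * W) j k‖ ^ 2) := by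
  have h1 : (star V * (A + B) * V) j j = ((μ j : ℝ) : ℂ) := by
    conv_lhs => rw [specC]
    rw [sandwich, hVst, one_norm_sum]
  have h2 : (star V * A * V) j j = ((∑ i, lam i * ‖(star V * U) j i‖ ^ 2 : ℝ) : ℂ) := by
    conv_lhs => rw [specA]
    rw [sandwich U V lam j, Complex.ofReal_inj]
    exact Finset.sum_congr rfl fun m _ => by rw [norm_flip]
  have h3 : (star V * B * V) j j = ((∑ k, ν k * ‖(star V * W) j k‖ ^ 2 : ℝ) : ℂ) := by
    conv_lhs => rw [specB]
    rw [sandwich W V ν j, Complex.ofReal_inj]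
    exact Finset.sum_congr rfl fun m _ => by rw [norm_flip]
  have h4 : (star V * (A + B) * V) j j = (star V * A * V) j j + (star V * B * V) j j := by
    rw [mul_add, add_mul, Matrix.add_apply]
  have := h1.symm.trans (h4.trans (by rw [h2, h3]))
  exact_mod_cast this

lemma key_half_gen {n : ℕ} (A B U W V : Matrix (Fin n) (Fin n) ℂ) (lam ν μ : Fin n → ℝ)
    (specA : A = U * diagonal (fun i => ((lam i : ℝ) : ℂ)) * star U)
    (specB : B = W * diagonal (fun k => ((ν k : ℝ) : ℂ)) * star W)
    (specC : A + B = V * diagonal (fun j => ((μ j : ℝ) : ℂ)) * star V)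
    (hUst : star U * U = 1) (hVst : star V * V = 1) (hVmul : V * star V = 1)
    (hlam : ∀ i, 0 ≤ lam i) (hν : ∀ k, 0 ≤ ν k) (hμ : ∀ j, 0 ≤ μ j)
    (r : ℝ) (hr : 1 ≤ r) :
    ∑ i, lam i ^ r ≤ ∑ j, μ j ^ (r - 1) * (∑ i, lam i * ‖(star V * U) j i‖ ^ 2) := by
  have hr0 : (0:ℝ) < r := lt_of_lt_of_le one_pos hr
  have hs0 : (0:ℝ) ≤ r - 1 := by linarith
  have hc : ∀ j i, (0:ℝ) ≤ ‖(star V * U) j i‖ ^ 2 := fun j i => sq_nonneg _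
  have hP1 : star (star V * U) * (star V * U) = 1 := by
    rw [Matrix.star_mul, star_star]
    calc star U * V * (star V * U) = star U * (V * star V) * U := by noncomm_ring
      _ = 1 := by rw [hVmul, mul_one, hUst]
  have hsum1 : ∀ i, ∑ j, ‖(star V * U) j i‖ ^ 2 = 1 := fun i => sum_norm_col _ hP1 i
  have hdec := mu_decomp_gen A B U W V lam ν μ specA specB specC hVst
  have hconstr : ∀ j i, lam i * ‖(star V * U) j i‖ ^ 2 ≤ μ j := by
    intro j i
    rw [hdec j]
    have h1 : lam i * ‖(star V * U) j i‖ ^ 2 ≤ ∑ i', lam i' * ‖(star V * U) j i'‖ ^ 2 :=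
      Finset.single_le_sum (f := fun i' => lam i' * ‖(star V * U) j i'‖ ^ 2)
        (fun i' _ => mul_nonneg (hlam i') (hc j i')) (Finset.mem_univ i)
    have h2 : (0:ℝ) ≤ ∑ k, ν k * ‖(star V * W) j k‖ ^ 2 :=
      Finset.sum_nonneg fun k _ => mul_nonneg (hν k) (sq_nonneg _)
    linarith
  have hswap : ∑ j, μ j ^ (r - 1) * (∑ i, lam i * ‖(star V * U) j i‖ ^ 2)
      = ∑ i, lam i * (∑ j, ‖(star V * U) j i‖ ^ 2 * μ j ^ (r - 1)) := by
    simp_rw [Finset.mul_sum]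
    rw [Finset.sum_comm]
    exact Finset.sum_congr rfl fun i _ => Finset.sum_congr rfl fun j _ => by ring
  rw [hswap]
  apply Finset.sum_le_sum
  intro i _
  rcases eq_or_lt_of_le (hlam i) with h0 | hpos
  · rw [← h0, Real.zero_rpow hr0.ne', zero_mul]
  have hkey : lam i ^ (r - 1) ≤ ∑ j, ‖(star V * U) j i‖ ^ 2 * μ j ^ (r - 1) := by
    apply sum_lemma μ (fun j => ‖(star V * U) j i‖ ^ 2) hμ (fun j => hc j i) (lam i) (r - 1)
      hpos hs0
    · intro j hj
      have h3 : lam i * ‖(star V * U) j i‖ ^ 2 = 0 :=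
        le_antisymm (le_of_le_of_eq (hconstr j i) hj) (mul_nonneg hpos.le (hc j i))
      exact (mul_eq_zero.mp h3).resolve_left hpos.ne'
    · exact hsum1 i
    · have := hneg_gen A B U W V lam ν μ specA specB specC hUst hVst hVmul hlam hν hμ i hpos
      calc ∑ j, ‖(star V * U) j i‖ ^ 2 * μ j ^ (-(1:ℝ)/2)
          = ∑ j, μ j ^ (-(1:ℝ)/2) * ‖(star V * U) j i‖ ^ 2 :=
            Finset.sum_congr rfl fun j _ => mul_comm _ _
        _ ≤ lam i ^ (-(1:ℝ)/2) := this
  have heq : lam i ^ r = lam i * lam i ^ (r - 1) := by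
    rw [mul_comm, ← Real.rpow_add_one hpos.ne']
    norm_num
  rw [heq]
  exact mul_le_mul_of_nonneg_left hkey hpos.le

/-- McCarthy: for PSD matrices and `r ≥ 1`, `tr(A^r) + tr(B^r) ≤ tr((A+B)^r)`. -/
theorem trace_rpow_add_le {n : ℕ} (A B : Matrix (Fin n) (Fin n) ℂ)
    (hA : A.PosSemidef) (hB : B.PosSemidef) (r : ℝ) (hr : 1 ≤ r) :
    ((matFun (fun x => x ^ r) A).trace).re + ((matFun (fun x => x ^ r) B).trace).re ≤
      ((matFun (fun x => x ^ r) (A + B)).trace).re := by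
  have hr0 : (0:ℝ) < r := lt_of_lt_of_le one_pos hr
  have hC : (A + B).PosSemidef := hA.add hB
  rw [trace_matFun (fun x => x ^ r) hA.1, trace_matFun (fun x => x ^ r) hB.1,
    trace_matFun (fun x => x ^ r) hC.1]
  have specA := spectral' hA.1
  have specB := spectral' hB.1
  have specC := spectral' hC.1
  have specC2 : B + A = (hC.1.eigenvectorUnitary : Matrix (Fin n) (Fin n) ℂ) *
      diagonal (fun j => ((hC.1.eigenvalues j : ℝ) : ℂ)) *
      star (hC.1.eigenvectorUnitary : Matrix (Fin n) (Fin n) ℂ) := by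
    rw [add_comm]; exact specC
  have hlamnn : ∀ i, 0 ≤ hA.1.eigenvalues i := fun i => hA.eigenvalues_nonneg i
  have hνnn : ∀ k, 0 ≤ hB.1.eigenvalues k := fun k => hB.eigenvalues_nonneg k
  have hμnn : ∀ j, 0 ≤ hC.1.eigenvalues j := fun j => hC.eigenvalues_nonneg j
  have h1 := key_half_gen A B _ _ _ _ _ _ specA specB specC
    (star_mul_self_eq_one hA.1) (star_mul_self_eq_one hC.1) (mul_star_self_eq_one hC.1)
    hlamnn hνnn hμnn r hr
  have h2 := key_half_gen B A _ _ _ _ _ _ specB specA specC2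
    (star_mul_self_eq_one hB.1) (star_mul_self_eq_one hC.1) (mul_star_self_eq_one hC.1)
    hνnn hlamnn hμnn r hr
  have hdec := mu_decomp_gen A B _ _ _ _ _ _ specA specB specC (star_mul_self_eq_one hC.1)
  have hsum : ∑ j, hC.1.eigenvalues j ^ r
      = (∑ j, hC.1.eigenvalues j ^ (r - 1) * (∑ i, hA.1.eigenvalues i *
          ‖(star (hC.1.eigenvectorUnitary : Matrix (Fin n) (Fin n) ℂ) *
            (hA.1.eigenvectorUnitary : Matrix (Fin n) (Fin n) ℂ)) j i‖ ^ 2))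
        + (∑ j, hC.1.eigenvalues j ^ (r - 1) * (∑ k, hB.1.eigenvalues k *
          ‖(star (hC.1.eigenvectorUnitary : Matrix (Fin n) (Fin n) ℂ) *
            (hB.1.eigenvectorUnitary : Matrix (Fin n) (Fin n) ℂ)) j k‖ ^ 2)) := by
    rw [← Finset.sum_add_distrib]
    apply Finset.sum_congr rfl
    intro j _
    rw [← mul_add, ← hdec j]
    rcases eq_or_lt_of_le (hμnn j) with h0 | hj
    · rw [← h0, Real.zero_rpow hr0.ne', mul_zero]
    · rw [← Real.rpow_add_one hj.ne']
      norm_num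
  rw [hsum]
  exact add_le_add h1 h2
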